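/- For every positive integer d and every positive integer t, |G(d,t,L)| ≤ Σ_{e=1}^d ⌊(e−1)/t⌋ · |B_{e,L}|. -/

import Mathlib

open Polynomial

noncomputable section

/-- The orbit of `j : ZMod N` under multiplication by `q`. -/
def qOrbit (N q : ℕ) (j : ZMod N) : Set (ZMod N) :=
  Set.range fun k : ℕ => (q : ZMod N) ^ k * j

/-- The set `L` of orbits of `ZMod N` under multiplication by `q`. -/
def orbitSet (N q : ℕ) : Set (Set (ZMod N)) :=
  {l | ∃ j : ZMod N, l = qOrbit N q j}

/-- `β ^ j` for a residue class `j`. -/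
def bpow {E : Type*} [Monoid E] {N : ℕ} (β : E) (j : ZMod N) : E :=
  β ^ j.val

/-- The check-matrix entry `h_{i l} = ∑_{j ∈ l} ρ(β^j) β^{i j}`, as an element of `E`. -/
def hEntry {F E : Type*} [CommSemiring F] [CommSemiring E] [Algebra F E] {N : ℕ}
    (β : E) (ρ : Polynomial F) (i : ℕ) (l : Set (ZMod N)) : E :=
  ∑ᶠ j ∈ l, Polynomial.aeval (bpow β j) ρ * bpow β j ^ i

/-- The code `C(ρ, t)` inside `F^L`. -/
def codeSet (F E : Type*) [Field F] [Field E] [Algebra F E] (N q : ℕ)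
    (β : E) (ρ : Polynomial F) (t : ℕ) : Set (↥(orbitSet N q) → F) :=
  {c | ∀ i < t, ∑ᶠ l : orbitSet N q,
    algebraMap F E (c l) * hEntry β ρ i (l : Set (ZMod N)) = 0}

open scoped Classical in
/-- `deg c = ∑_{l : c_l ≠ 0} |l|`. -/
def wdeg {F : Type*} [Zero F] {N q : ℕ} (c : ↥(orbitSet N q) → F) : ℕ :=
  ∑ᶠ l : orbitSet N q, if c l ≠ 0 then (l : Set (ZMod N)).ncard else 0

/-- The set `B_{d,L}` of words of degree `d`. -/
def Bset (F : Type*) [Field F] (N q d : ℕ) : Set (↥(orbitSet N q) → F) :=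
  {r | wdeg r = d}

/-- The set `G_{d,t,L}` of monic irreducible polynomials `g` of degree `t` over `F` having
no roots in `E` such that `C(g⁻¹, t)` contains a word of `B_{d,L}`. -/
def Gset (F E : Type*) [Field F] [Field E] [Algebra F E] (N q : ℕ) (β : E)
    (d t : ℕ) : Set (Polynomial F) :=
  {g | g.Monic ∧ Irreducible g ∧ g.natDegree = t ∧
    (∀ x : E, Polynomial.aeval x g ≠ 0) ∧
    ∃ ginv : Polynomial F, ginv.degree < (N : WithBot ℕ) ∧
      ((X : Polynomial F) ^ N - 1 ∣ g * ginv - 1) ∧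
      ∃ r ∈ Bset F N q d, r ∈ codeSet F E N q β ginv t}

section Helpers
open Finset

section OrbitLemmas
variable {N q : ℕ}

def oMap (N q : ℕ) (j : ZMod N) : ↥(orbitSet N q) := ⟨qOrbit N q j, j, rfl⟩

lemma mem_qOrbit_self (j : ZMod N) : j ∈ qOrbit N q j := ⟨0, by simp⟩

lemma qOrbit_subset_of_mem {x j : ZMod N} (h : x ∈ qOrbit N q j) :
    qOrbit N q x ⊆ qOrbit N q j := by
  obtain ⟨k, rfl⟩ := h
  rintro y ⟨n, rfl⟩
  exact ⟨n + k, by simp [pow_add, mul_assoc]⟩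

lemma mem_qOrbit_symm [NeZero N] (hq : IsUnit (q : ZMod N)) {x j : ZMod N}
    (h : x ∈ qOrbit N q j) : j ∈ qOrbit N q x := by
  obtain ⟨k, rfl⟩ := h
  obtain ⟨u, hu⟩ := hq
  have ho : 0 < orderOf u := orderOf_pos u
  have hpow : (q : ZMod N) ^ orderOf u = 1 := by
    have := pow_orderOf_eq_one u
    calc (q : ZMod N) ^ orderOf u = ((u : ZMod N)) ^ orderOf u := by rw [hu]
    _ = ((u ^ orderOf u : (ZMod N)ˣ) : ZMod N) := by rw [Units.val_pow_eq_pow_val]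
    _ = 1 := by rw [this]; rfl
  refine ⟨k * (orderOf u - 1), ?_⟩
  show (q : ZMod N) ^ (k * (orderOf u - 1)) * ((q : ZMod N) ^ k * j) = j
  have h1 : k * (orderOf u - 1) + k = orderOf u * k := by
    have h2 : k * (orderOf u - 1) = k * orderOf u - k := by rw [Nat.mul_sub, mul_one]
    have h3 : k ≤ k * orderOf u := Nat.le_mul_of_pos_right k ho
    have h4 : orderOf u * k = k * orderOf u := mul_comm _ _
    omega
  have : (q : ZMod N) ^ (k * (orderOf u - 1)) * ((q : ZMod N) ^ k * j)
      = ((q : ZMod N) ^ orderOf u) ^ k * j := by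
    rw [← mul_assoc, ← pow_add, h1, pow_mul]
  rw [this, hpow, one_pow, one_mul]

lemma qOrbit_eq_of_mem [NeZero N] (hq : IsUnit (q : ZMod N)) {x j : ZMod N}
    (h : x ∈ qOrbit N q j) : qOrbit N q x = qOrbit N q j :=
  le_antisymm (qOrbit_subset_of_mem h) (qOrbit_subset_of_mem (mem_qOrbit_symm hq h))

lemma oMap_eq_iff [NeZero N] (hq : IsUnit (q : ZMod N)) (j : ZMod N)
    (l : ↥(orbitSet N q)) : oMap N q j = l ↔ j ∈ (l : Set (ZMod N)) := by
  obtain ⟨j0, hl⟩ := l.2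
  constructor
  · rintro h
    have h2 : qOrbit N q j = (l : Set (ZMod N)) := congrArg Subtype.val h
    rw [← h2]; exact mem_qOrbit_self j
  · intro h
    refine Subtype.ext ?_
    show qOrbit N q j = (l : Set (ZMod N))
    rw [hl] at h ⊢
    exact qOrbit_eq_of_mem hq h

open scoped Classical in
/-- partition sums over `ZMod N` into orbit fibers -/
lemma sum_fiber_orbit [NeZero N] (hq : IsUnit (q : ZMod N)) {M : Type*} [AddCommMonoid M]
    (f : ZMod N → M) :
    ∑ l : ↥(orbitSet N q), ∑ j ∈ Finset.univ.filter (fun j => oMap N q j = l), f j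
      = ∑ j : ZMod N, f j := by
  exact Finset.sum_fiberwise_of_maps_to (fun j _ => Finset.mem_univ _) f

end OrbitLemmas

lemma key_factor {E : Type*} [Field E] (g : Polynomial E) {t : ℕ} (hg : g.natDegree < t + 1)
    (w : E) :
    g - C (g.eval w) =
      (∑ s ∈ range (t + 1), C (g.coeff s) *
        ∑ p ∈ range s, X ^ p * C w ^ (s - 1 - p)) * (X - C w) := by
  rw [Finset.sum_mul]
  have hrhs : ∀ s ∈ range (t + 1),
      (C (g.coeff s) * ∑ p ∈ range s, X ^ p * C w ^ (s - 1 - p)) * (X - C w)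
        = C (g.coeff s) * X ^ s - C (g.coeff s) * C w ^ s := by
    intro s _
    rw [mul_assoc, geom_sum₂_mul, mul_sub]
  rw [Finset.sum_congr rfl hrhs, Finset.sum_sub_distrib]
  have hev : g.eval w = ∑ s ∈ range (t + 1), g.coeff s * w ^ s := by
    conv_lhs => rw [g.as_sum_range' (t + 1) hg]
    simp [eval_finset_sum]
  congr 1
  · conv_lhs => rw [g.as_sum_range' (t + 1) hg]
    exact Finset.sum_congr rfl fun s _ => (C_mul_X_pow_eq_monomial).symm
  · rw [hev, map_sum]
    exact Finset.sum_congr rfl fun s _ => by rw [map_mul, map_pow]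

section Words
variable {F E : Type*} [Field F] [Field E] [Algebra F E] {N q : ℕ} [NeZero N]
open scoped Classical

def avec (r : ↥(orbitSet N q) → F) (j : ZMod N) : F := r (oMap N q j)

def suppJ (r : ↥(orbitSet N q) → F) : Finset (ZMod N) :=
  Finset.univ.filter fun j => avec r j ≠ 0

lemma fiber_finset_eq (hq : IsUnit (q : ZMod N)) (l : ↥(orbitSet N q)) :
    ((l : Set (ZMod N)) : Set (ZMod N)) =
      ↑(Finset.univ.filter fun j => oMap N q j = l) := by
  ext j
  simp [oMap_eq_iff hq]

lemma codeSet_S (hq : IsUnit (q : ZMod N)) (β : E) (ρ : Polynomial F) {t : ℕ}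
    {r : ↥(orbitSet N q) → F} (hr : r ∈ codeSet F E N q β ρ t) {i : ℕ} (hi : i < t) :
    ∑ j : ZMod N, algebraMap F E (avec r j) * (aeval (bpow β j) ρ * bpow β j ^ i) = 0 := by
  have h0 := hr i hi
  rw [finsum_eq_sum_of_fintype] at h0
  rw [← sum_fiber_orbit hq]
  rw [← h0]
  refine Finset.sum_congr rfl fun l _ => ?_
  rw [hEntry, fiber_finset_eq hq l, finsum_mem_coe_finset, Finset.mul_sum]
  refine Finset.sum_congr rfl fun j hj => ?_
  have : oMap N q j = l := (Finset.mem_filter.mp hj).2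
  rw [avec, this]

lemma wdeg_eq_card (hq : IsUnit (q : ZMod N)) (r : ↥(orbitSet N q) → F) :
    wdeg r = (suppJ r).card := by
  rw [wdeg, finsum_eq_sum_of_fintype]
  have : ∀ l : ↥(orbitSet N q), (if r l ≠ 0 then (l : Set (ZMod N)).ncard else 0)
      = ∑ j ∈ Finset.univ.filter (fun j => oMap N q j = l),
          (if avec r j ≠ 0 then 1 else 0) := by
    intro l
    have hcard : (l : Set (ZMod N)).ncard
        = (Finset.univ.filter fun j => oMap N q j = l).card := by
      rw [fiber_finset_eq hq l, Set.ncard_coe_finset]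
    by_cases h : r l ≠ 0
    · rw [if_pos h, hcard, Finset.card_eq_sum_ones]
      refine Finset.sum_congr rfl fun j hj => ?_
      have hj2 : oMap N q j = l := (Finset.mem_filter.mp hj).2
      rw [if_pos (by rw [avec, hj2]; exact h)]
    · rw [if_neg h]
      push_neg at h
      rw [eq_comm, Finset.sum_eq_zero]
      intro j hj
      have hj2 : oMap N q j = l := (Finset.mem_filter.mp hj).2
      rw [if_neg (by rw [avec, hj2]; simpa using h)]
  rw [Finset.sum_congr rfl fun l _ => this l, sum_fiber_orbit hq, suppJ,
    ← Finset.sum_filter, Finset.card_eq_sum_ones]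

lemma sum_suppJ_S (hq : IsUnit (q : ZMod N)) (β : E) (ρ : Polynomial F) {t : ℕ}
    {r : ↥(orbitSet N q) → F} (hr : r ∈ codeSet F E N q β ρ t) {i : ℕ} (hi : i < t) :
    ∑ j ∈ suppJ r, algebraMap F E (avec r j) * (aeval (bpow β j) ρ * bpow β j ^ i) = 0 := by
  rw [← codeSet_S hq β ρ hr hi, suppJ]
  refine Finset.sum_filter_of_ne fun j _ h => ?_
  intro h0
  rw [h0] at h
  simp at h

def fpoly (β : E) (r : ↥(orbitSet N q) → F) : Polynomial E :=
  ∑ j ∈ suppJ r, C (algebraMap F E (avec r j)) *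
    ∏ k ∈ (suppJ r).erase j, (X - C (bpow β k))


lemma fpoly_ne_zero (β : E) (hinj : Function.Injective fun j : ZMod N => bpow β j)
    (r : ↥(orbitSet N q) → F) (hne : (suppJ r).Nonempty) : fpoly β r ≠ 0 := by
  obtain ⟨j0, hj0⟩ := hne
  intro hzero
  have heval : (fpoly β r).eval (bpow β j0) = 0 := by rw [hzero, eval_zero]
  rw [fpoly, eval_finset_sum] at heval
  rw [Finset.sum_eq_single j0 ?h1 ?h2] at heval
  case h1 =>
    intro j hj hjne
    rw [eval_mul, eval_prod]
    have hj0m : j0 ∈ (suppJ r).erase j := Finset.mem_erase.mpr ⟨hjne.symm, hj0⟩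
    rw [Finset.prod_eq_zero hj0m (by rw [eval_sub, eval_X, eval_C, sub_self]), mul_zero]
  case h2 => intro h; exact absurd hj0 h
  rw [eval_mul, eval_C] at heval
  have h1 : algebraMap F E (avec r j0) ≠ 0 := by
    have := (Finset.mem_filter.mp hj0).2
    simpa using this
  have h2 : (∏ k ∈ (suppJ r).erase j0, (X - C (bpow β k))).eval (bpow β j0) ≠ 0 := by
    rw [eval_prod]
    refine Finset.prod_ne_zero_iff.mpr fun k hk => ?_
    rw [eval_sub, eval_X, eval_C]
    refine sub_ne_zero.mpr fun hEq => ?_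
    exact (Finset.mem_erase.mp hk).1 (hinj hEq.symm)
  exact (mul_ne_zero h1 h2) heval

lemma fpoly_natDegree_le (β : E) (r : ↥(orbitSet N q) → F) :
    (fpoly β r).natDegree ≤ (suppJ r).card - 1 := by
  refine natDegree_sum_le_of_forall_le _ _ fun j hj => ?_
  refine le_trans (natDegree_C_mul_le _ _) ?_
  refine le_trans (natDegree_prod_le _ _) ?_
  have : ∀ k ∈ (suppJ r).erase j, (X - C (bpow β k) : Polynomial E).natDegree ≤ 1 :=
    fun k _ => le_of_eq (natDegree_X_sub_C _)
  refine le_trans (Finset.sum_le_sum this) ?_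
  rw [Finset.sum_const, smul_eq_mul, mul_one, Finset.card_erase_of_mem hj]

lemma count_set_le {t e : ℕ} (ht : 0 < t)
    (f : Polynomial E) (hf0 : f ≠ 0) (hfd : f.natDegree ≤ e - 1)
    (T : Set (Polynomial F))
    (hT : ∀ g ∈ T, g.Monic ∧ Irreducible g ∧ g.natDegree = t ∧
      g.map (algebraMap F E) ∣ f) :
    T.ncard ≤ (e - 1) / t := by
  by_cases hfin : T.Finite
  · have hsub : ∀ g ∈ hfin.toFinset, g.Monic ∧ Irreducible g ∧ g.natDegree = t ∧
        g.map (algebraMap F E) ∣ f := fun g hg => hT g (hfin.mem_toFinset.mp hg)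
    have hdvd : ∏ g ∈ hfin.toFinset, g.map (algebraMap F E) ∣ f := by
      refine Finset.prod_dvd_of_coprime ?_ fun g hg => (hsub g hg).2.2.2
      intro g1 h1 g2 h2 hne
      have hm1 : g1 ∈ hfin.toFinset := Finset.mem_coe.mp h1
      have hm2 : g2 ∈ hfin.toFinset := Finset.mem_coe.mp h2
      have hc : IsCoprime g1 g2 := by
        rw [Irreducible.coprime_iff_not_dvd (hsub g1 hm1).2.1]
        intro hdvd12
        exact hne (eq_of_monic_of_associated (hsub g1 hm1).1 (hsub g2 hm2).1
          ((hsub g1 hm1).2.1.associated_of_dvd (hsub g2 hm2).2.1 hdvd12))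
      have := hc.map (Polynomial.mapRingHom (algebraMap F E))
      simpa [Function.onFun] using this
    have hnz : ∀ g ∈ hfin.toFinset, g.map (algebraMap F E) ≠ 0 := fun g hg =>
      ((hsub g hg).1.map (algebraMap F E)).ne_zero
    have hdeg : (∏ g ∈ hfin.toFinset, g.map (algebraMap F E)).natDegree
        = hfin.toFinset.card * t := by
      rw [Polynomial.natDegree_prod _ _ hnz]
      rw [Finset.sum_congr rfl fun g hg => ?_, Finset.sum_const, smul_eq_mul]
      rw [(hsub g hg).1.natDegree_map, (hsub g hg).2.2.1]
    have hle : hfin.toFinset.card * t ≤ e - 1 := by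
      rw [← hdeg]
      exact le_trans (Polynomial.natDegree_le_of_dvd hdvd hf0) hfd
    rw [Set.ncard_eq_toFinset_card T hfin]
    exact (Nat.le_div_iff_mul_le ht).mpr (by simpa using hle)
  · rw [Set.Infinite.ncard hfin]
    exact Nat.zero_le _

def Qpoly {E : Type*} [Field E] (gE : Polynomial E) (t : ℕ) (w : E) : Polynomial E :=
  ∑ s ∈ range (t + 1), C (gE.coeff s) * ∑ p ∈ range s, X ^ p * C w ^ (s - 1 - p)

lemma map_dvd_fpoly (hq : IsUnit (q : ZMod N)) (β : E) (hβN : β ^ N = 1)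
    {t : ℕ} (g : Polynomial F) (hgd : g.natDegree = t)
    (hroots : ∀ x : E, aeval x g ≠ 0)
    (ginv : Polynomial F) (hdvd : (X : Polynomial F) ^ N - 1 ∣ g * ginv - 1)
    {r : ↥(orbitSet N q) → F} (hr : r ∈ codeSet F E N q β ginv t) :
    g.map (algebraMap F E) ∣ fpoly β r := by
  set gE := g.map (algebraMap F E) with hgE
  set J := suppJ r with hJ
  have hGa : ∀ j : ZMod N, gE.eval (bpow β j) = aeval (bpow β j) g := fun j => by
    rw [hgE, Polynomial.eval_map, Polynomial.aeval_def]
  have hG0 : ∀ j : ZMod N, aeval (bpow β j) g ≠ 0 := fun j => hroots _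
  have hginv : ∀ j : ZMod N, aeval (bpow β j) ginv = (aeval (bpow β j) g)⁻¹ := by
    intro j
    obtain ⟨cc, hcc⟩ := hdvd
    have hωN : bpow β j ^ N = 1 := by
      show (β ^ (j : ZMod N).val) ^ N = 1
      rw [← pow_mul, mul_comm, pow_mul, hβN, one_pow]
    have h1 : aeval (bpow β j) (g * ginv - 1) = 0 := by
      rw [hcc, map_mul]
      have h0 : aeval (bpow β j) ((X : Polynomial F) ^ N - 1) = 0 := by
        rw [map_sub, map_pow, aeval_X, map_one, hωN, sub_self]
      rw [h0, zero_mul]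
    have h2 : aeval (bpow β j) g * aeval (bpow β j) ginv = 1 := by
      rw [map_sub, map_mul, map_one, sub_eq_zero] at h1
      exact h1
    exact (inv_eq_of_mul_eq_one_right h2).symm
  set c : ZMod N → E := fun j =>
    algebraMap F E (avec r j) * (aeval (bpow β j) g)⁻¹ with hc
  have hS : ∀ i < t, ∑ j ∈ J, c j * bpow β j ^ i = 0 := by
    intro i hi
    have h0 := sum_suppJ_S hq β ginv hr hi
    rw [← h0]
    refine Finset.sum_congr rfl fun j _ => ?_
    rw [hc, hginv j]
    ring
  have hgEdeg : gE.natDegree < t + 1 := by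
    have h1 : gE.natDegree ≤ g.natDegree := natDegree_map_le
    rw [hgd] at h1
    omega
  have hfactor : ∀ j : ZMod N, C (aeval (bpow β j) g) - gE
      = -(Qpoly gE t (bpow β j) * (X - C (bpow β j))) := by
    intro j
    have hkf := key_factor gE hgEdeg (bpow β j)
    rw [hGa j] at hkf
    rw [Qpoly]
    linear_combination -hkf
  set h : Polynomial E := ∑ j ∈ J, C (c j) * ∏ k ∈ J.erase j, (X - C (bpow β k)) with hh
  set Z : Polynomial E := ∏ k ∈ J, (X - C (bpow β k)) with hZ
  have hmain : fpoly β r - gE * h = -(∑ j ∈ J, C (c j) * Qpoly gE t (bpow β j)) * Z := by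
    rw [hh, Finset.mul_sum, fpoly, ← hJ, ← Finset.sum_sub_distrib, neg_mul, Finset.sum_mul,
      ← Finset.sum_neg_distrib]
    refine Finset.sum_congr rfl fun j hj => ?_
    have hCa : (C (algebraMap F E (avec r j)) : Polynomial E)
        = C (c j) * C (aeval (bpow β j) g) := by
      rw [← map_mul]
      congr 1
      simp only [hc]
      rw [mul_assoc, inv_mul_cancel₀ (hG0 j), mul_one]
    rw [hCa]
    have hZe : Z = (X - C (bpow β j)) * ∏ k ∈ J.erase j, (X - C (bpow β k)) :=
      (Finset.mul_prod_erase J _ hj).symm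
    rw [hZe]
    have hstep : C (c j) * C (aeval (bpow β j) g) * ∏ k ∈ J.erase j, (X - C (bpow β k))
          - gE * (C (c j) * ∏ k ∈ J.erase j, (X - C (bpow β k)))
        = (C (c j) * (C (aeval (bpow β j) g) - gE)) * ∏ k ∈ J.erase j, (X - C (bpow β k)) := by
      ring
    rw [hstep, hfactor j]
    ring
  have hU : ∑ j ∈ J, C (c j) * Qpoly gE t (bpow β j) = 0 := by
    have hswap : ∑ j ∈ J, C (c j) * Qpoly gE t (bpow β j)
        = ∑ s ∈ range (t + 1), ∑ j ∈ J,
            C (c j) * (C (gE.coeff s) * ∑ p ∈ range s, X ^ p * C (bpow β j) ^ (s - 1 - p)) := by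
      rw [Finset.sum_comm]
      exact Finset.sum_congr rfl fun j _ => by rw [Qpoly, Finset.mul_sum]
    rw [hswap]
    refine Finset.sum_eq_zero fun s hs => ?_
    have hs' : s ≤ t := by simpa [Nat.lt_succ_iff] using hs
    have hstep2 : ∀ j ∈ J,
        C (c j) * (C (gE.coeff s) * ∑ p ∈ range s, X ^ p * C (bpow β j) ^ (s - 1 - p))
          = C (gE.coeff s) * ∑ p ∈ range s, X ^ p * C (c j * bpow β j ^ (s - 1 - p)) := by
      intro j _
      rw [Finset.mul_sum, Finset.mul_sum, Finset.mul_sum]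
      refine Finset.sum_congr rfl fun p _ => ?_
      simp only [hc, map_mul, ← map_pow]
      ring
    rw [Finset.sum_congr rfl hstep2, ← Finset.mul_sum, Finset.sum_comm]
    have hinner : ∀ p ∈ range s,
        ∑ j ∈ J, X ^ p * C (c j * bpow β j ^ (s - 1 - p)) = 0 := by
      intro p hp
      have hps : p < s := Finset.mem_range.mp hp
      have hlt : s - 1 - p < t := by omega
      rw [← Finset.mul_sum, ← map_sum, hS _ hlt, map_zero, mul_zero]
    rw [Finset.sum_congr rfl hinner, Finset.sum_const, smul_zero, mul_zero]
  rw [hU, neg_zero, zero_mul, sub_eq_zero] at hmain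
  exact ⟨h, hmain⟩

end Words

lemma ncard_biUnion_le' {α β : Type*} (s : Finset α) (f : α → Set β) :
    (⋃ a ∈ s, f a).ncard ≤ ∑ a ∈ s, (f a).ncard := by
  classical
  induction s using Finset.induction_on with
  | empty => simp
  | insert a s ha ih =>
    rw [Finset.set_biUnion_insert, Finset.sum_insert ha]
    exact le_trans (Set.ncard_union_le _ _) (by omega)

open scoped Classical in
lemma Gset_ncard_le {F E : Type*} [Field F] [Field E] [Algebra F E] [Finite F]
    {N q : ℕ} [NeZero N]
    (hq : IsUnit (q : ZMod N)) (β : E) (hβN : β ^ N = 1)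
    (hinj : Function.Injective fun j : ZMod N => bpow β j)
    {t e : ℕ} (ht : 0 < t) (he : 1 ≤ e) :
    (Gset F E N q β e t).ncard ≤ ((e - 1) / t) * (Bset F N q e).ncard := by
  have hBfin : (Bset F N q e).Finite := Set.toFinite _
  set T : (↥(orbitSet N q) → F) → Set (Polynomial F) := fun r =>
    {g | g ∈ Gset F E N q β e t ∧ g.map (algebraMap F E) ∣ fpoly β r} with hTdef
  have hcover : Gset F E N q β e t = ⋃ r ∈ hBfin.toFinset, T r := by
    apply subset_antisymm
    · intro g hg
      obtain ⟨hmon, hirr, hdeg, hroots, ginv, hdegv, hdvd, r, hrB, hrc⟩ := hg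
      refine Set.mem_biUnion (hBfin.mem_toFinset.mpr hrB) ?_
      exact ⟨⟨hmon, hirr, hdeg, hroots, ginv, hdegv, hdvd, r, hrB, hrc⟩,
        map_dvd_fpoly hq β hβN g hdeg hroots ginv hdvd hrc⟩
    · intro g hg
      obtain ⟨s, ⟨r, rfl⟩, hs⟩ := hg
      simp only [Set.mem_iUnion, exists_prop] at hs
      obtain ⟨hrB, hgT, _⟩ := hs
      exact hgT
  rw [hcover]
  refine le_trans (ncard_biUnion_le' _ _) ?_
  have hbound : ∀ r ∈ hBfin.toFinset, (T r).ncard ≤ (e - 1) / t := by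
    intro r hrB
    have hrB' : wdeg r = e := hBfin.mem_toFinset.mp hrB
    have hcard : (suppJ r).card = e := by rw [← wdeg_eq_card hq r]; exact hrB'
    have hne : (suppJ r).Nonempty := Finset.card_pos.mp (by omega)
    refine count_set_le ht (fpoly β r) (fpoly_ne_zero β hinj r hne) ?_ (T r) ?_
    · rw [← hcard]; exact fpoly_natDegree_le β r
    · rintro g ⟨⟨hmon, hirr, hdeg, _⟩, hdvd⟩
      exact ⟨hmon, hirr, hdeg, hdvd⟩
  calc (∑ r ∈ hBfin.toFinset, (T r).ncard)
      ≤ ∑ _r ∈ hBfin.toFinset, (e - 1) / t := Finset.sum_le_sum hbound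
    _ = hBfin.toFinset.card * ((e - 1) / t) := by rw [Finset.sum_const, smul_eq_mul]
    _ = ((e - 1) / t) * (Bset F N q e).ncard := by
        rw [Set.ncard_eq_toFinset_card _ hBfin, mul_comm]

end Helpers

/-- `|G(d,t,L)| ≤ ∑_{e=1}^d ⌊(e−1)/t⌋ · |B_{e,L}|` where `G(d,t,L) = ∪_{e=1}^d G_{e,t,L}`. -/
theorem card_GsetUnion_le (q m : ℕ) (hm : 0 < m) (hqm : Nat.Coprime q m)
    (F E : Type*) [Field F] [Field E] [Fintype F] [Fintype E] [Algebra F E]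
    (hF : Fintype.card F = q) (hE : Fintype.card E = q ^ m)
    (β : E) (hβ : orderOf β = q ^ m - 1) (d t : ℕ) (hd : 0 < d) (ht : 0 < t) :
    (⋃ e ∈ Finset.Icc 1 d, Gset F E (q ^ m - 1) q β e t).ncard ≤
      ∑ e ∈ Finset.Icc 1 d, ((e - 1) / t) * (Bset F (q ^ m - 1) q e).ncard := by
  classical
  have hq2 : 1 < q := by rw [← hF]; exact Fintype.one_lt_card
  have hqm1 : 1 < q ^ m := Nat.one_lt_pow hm.ne' hq2
  haveI : NeZero (q ^ m - 1) := ⟨by omega⟩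
  have hcop : Nat.Coprime q (q ^ m - 1) := by
    have h1 : Nat.gcd q (q ^ m - 1) ∣ q ^ m :=
      (Nat.gcd_dvd_left q _).trans (dvd_pow_self q hm.ne')
    have h2 : Nat.gcd q (q ^ m - 1) ∣ q ^ m - 1 := Nat.gcd_dvd_right q _
    have h3 : Nat.gcd q (q ^ m - 1) ∣ q ^ m - (q ^ m - 1) := Nat.dvd_sub h1 h2
    have h4 : q ^ m - (q ^ m - 1) = 1 := by omega
    rw [h4] at h3
    exact Nat.eq_one_of_dvd_one h3
  have hqU : IsUnit ((q : ZMod (q ^ m - 1))) :=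
    ⟨ZMod.unitOfCoprime q hcop, ZMod.coe_unitOfCoprime q hcop⟩
  have hβN : β ^ (q ^ m - 1) = 1 := by rw [← hβ]; exact pow_orderOf_eq_one β
  have hinj : Function.Injective fun j : ZMod (q ^ m - 1) => bpow β j := by
    intro j k h
    have hjv : j.val ∈ Set.Iio (orderOf β) := by
      rw [hβ]; exact Set.mem_Iio.mpr (ZMod.val_lt j)
    have hkv : k.val ∈ Set.Iio (orderOf β) := by
      rw [hβ]; exact Set.mem_Iio.mpr (ZMod.val_lt k)
    exact ZMod.val_injective _ (pow_injOn_Iio_orderOf hjv hkv h)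
  refine le_trans (ncard_biUnion_le' _ _) (Finset.sum_le_sum fun e heI => ?_)
  exact Gset_ncard_le hqU β hβN hinj ht (Finset.mem_Icc.mp heI).1
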